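/- Let A be an irreducible matrix with entries in {0}∪μ_n indexed by X × Y. If D and E are diagonal matrices with entries in μ_n (indexed by X and Y respectively) such that D A E* = A, then D and E are both scalar matrices with the same scalar value; i.e. there exists ζ ∈ μ_n with D = ζI and E = ζI. -/

import Mathlib

open Matrix
/-- If `A` is irreducible (its bipartite graph is connected) with entries in
{0} ∪ μ_n, and diagonal μ_n-matrices `D`, `E` satisfy `D A E* = A`, then `D` and `E` are
scalar matrices with the same scalar value ζ ∈ μ_n. -/
theorem stmt_1 {X Y : Type*} [Fintype X] [Fintype Y] [DecidableEq X] [DecidableEq Y]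
    (n : ℕ) (hn : 0 < n) (A : Matrix X Y ℂ)
    (hent : ∀ x y, A x y = 0 ∨ (A x y) ^ n = 1)
    (hirr : (SimpleGraph.fromRel (fun u v : X ⊕ Y =>
        ∃ x y, A x y ≠ 0 ∧ u = Sum.inl x ∧ v = Sum.inr y)).Connected)
    (d : X → ℂ) (e : Y → ℂ) (hd : ∀ x, (d x) ^ n = 1) (he : ∀ y, (e y) ^ n = 1)
    (hDE : Matrix.diagonal d * A * (Matrix.diagonal e)ᴴ = A) :
    ∃ ζ : ℂ, ζ ^ n = 1 ∧ (∀ x, d x = ζ) ∧ (∀ y, e y = ζ) := by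
  have hestar : ∀ y, (starRingEnd ℂ) (e y) * e y = 1 := by
    intro y
    have habs : ‖e y‖ = 1 := by
      have h1 : ‖e y‖ ^ n = 1 := by
        rw [← norm_pow, he y]; exact norm_one
      rcases (pow_eq_one_iff_cases).mp h1 with h | h | h
      · omega
      · exact h
      · nlinarith [norm_nonneg (e y), h.1]
    have h2 : ((starRingEnd ℂ) (e y)) * e y = ((‖e y‖ : ℂ))^2 := by
      rw [mul_comm, Complex.mul_conj, Complex.normSq_eq_norm_sq]
      push_cast; ring
    rw [h2, habs]; norm_num
  have key : ∀ x y, A x y ≠ 0 → d x = e y := by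
    intro x y hA
    have h1 : d x * A x y * (starRingEnd ℂ) (e y) = A x y := by
      have := congrFun (congrFun hDE x) y
      simpa [Matrix.diagonal_conjTranspose, Matrix.mul_apply, Matrix.diagonal_apply,
        Finset.sum_ite_eq, Finset.sum_ite_eq', mul_comm] using this
    have h2 : d x * (starRingEnd ℂ) (e y) = 1 := by
      have h3 : A x y * (d x * (starRingEnd ℂ) (e y)) = A x y * 1 := by
        linear_combination h1
      exact mul_left_cancel₀ hA h3
    calc d x = d x * ((starRingEnd ℂ) (e y) * e y) := by rw [hestar y, mul_one]
      _ = (d x * (starRingEnd ℂ) (e y)) * e y := by ring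
      _ = e y := by rw [h2, one_mul]
  set f : X ⊕ Y → ℂ := Sum.elim d e with hf
  have hadj : ∀ u v : X ⊕ Y, (SimpleGraph.fromRel (fun u v : X ⊕ Y =>
        ∃ x y, A x y ≠ 0 ∧ u = Sum.inl x ∧ v = Sum.inr y)).Adj u v → f u = f v := by
    intro u v huv
    rw [SimpleGraph.fromRel_adj] at huv
    rcases huv.2 with ⟨x, y, hA, rfl, rfl⟩ | ⟨x, y, hA, rfl, rfl⟩
    · simpa [hf] using key x y hA
    · simpa [hf] using (key x y hA).symm
  have hconst : ∀ u v : X ⊕ Y, f u = f v := by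
    intro u v
    obtain ⟨w⟩ := hirr u v
    induction w with
    | nil => rfl
    | cons h _ ih => exact (hadj _ _ h).trans ih
  obtain ⟨v0⟩ := hirr.nonempty
  refine ⟨f v0, ?_, fun x => hconst (Sum.inl x) v0, fun y => hconst (Sum.inr y) v0⟩
  cases v0 with
  | inl x => simpa [hf] using hd x
  | inr y => simpa [hf] using he y
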